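/- arXiv:2311.03209 — 2 statements merged into one kernel-verified Lean document; each statement's English description precedes it below -/
import Mathlib

section
/- Let G = (g^{ab}) be a symmetric positive definite real 3×3 matrix. For all p, q ∈ ℝ³ one has h² ≤ g^{ab}(p_a−q_a)(p_b−q_b) ≤ p⁰ q⁰ h². -/
open Matrix Real

noncomputable section

/-- 3×3 real matrices. -/
abbrev Mat3 := Matrix (Fin 3) (Fin 3) ℝ
/-- Momentum vectors in ℝ³. -/
abbrev V3 := Fin 3 → ℝ

/-- The quadratic form `g^{ab} p_a p_b = pᵀ G p`. -/
def quadG (G : Mat3) (p : V3) : ℝ := p ⬝ᵥ G *ᵥ p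

/-- The particle energy `p⁰ = √(1 + g^{ab} p_a p_b)`. -/
def p0 (G : Mat3) (p : V3) : ℝ := Real.sqrt (1 + quadG G p)

/-- The relative momentum `h = √(−(p⁰−q⁰)² + g^{ab}(p_a−q_a)(p_b−q_b))`. -/
def hrel (G : Mat3) (p q : V3) : ℝ :=
  Real.sqrt (-(p0 G p - p0 G q) ^ 2 + quadG G (p - q))

lemma bil_symm (G : Mat3) (hG : G.IsHermitian) (x y : V3) :
    y ⬝ᵥ G *ᵥ x = x ⬝ᵥ G *ᵥ y := by
  have hsym : ∀ i j, G i j = G j i := fun i j => by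
    have := congrFun (congrFun hG.symm i) j
    simpa [Matrix.conjTranspose_apply] using this
  simp only [dotProduct, mulVec, Finset.mul_sum]
  rw [Finset.sum_comm]
  exact Finset.sum_congr rfl fun i _ => Finset.sum_congr rfl fun j _ => by
    rw [hsym j i]; ring

lemma quad_sub (G : Mat3) (hG : G.IsHermitian) (x y : V3) :
    quadG G (x - y) = quadG G x + quadG G y - 2 * (x ⬝ᵥ G *ᵥ y) := by
  simp only [quadG, sub_dotProduct, Matrix.mulVec_sub, dotProduct_sub]
  rw [bil_symm G hG x y]
  ring

lemma quad_smul_add (G : Mat3) (hG : G.IsHermitian) (x y : V3) (t : ℝ) :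
    quadG G (x + t • y) =
      quadG G y * (t * t) + 2 * (x ⬝ᵥ G *ᵥ y) * t + quadG G x := by
  simp only [quadG, add_dotProduct, Matrix.mulVec_add, dotProduct_add,
    smul_dotProduct, Matrix.mulVec_smul, dotProduct_smul, smul_eq_mul]
  rw [bil_symm G hG x y]
  ring

lemma cauchy_schwarz (G : Mat3) (hG : G.PosSemidef) (x y : V3) :
    (x ⬝ᵥ G *ᵥ y) ^ 2 ≤ quadG G x * quadG G y := by
  have hd : discrim (quadG G y) (2 * (x ⬝ᵥ G *ᵥ y)) (quadG G x) ≤ 0 := by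
    apply discrim_le_zero
    intro t
    have h := hG.dotProduct_mulVec_nonneg (x + t • y)
    rw [show star (x + t • y) = x + t • y from rfl] at h
    have := quad_smul_add G hG.1 x y t
    rw [quadG] at this
    linarith [this ▸ h]
  rw [discrim] at hd
  nlinarith [hd]

/-- for a symmetric positive definite `G` and all `p, q ∈ ℝ³`,
`h² ≤ g^{ab}(p_a−q_a)(p_b−q_b) ≤ p⁰ q⁰ h²`. -/
theorem stmt1 (G : Mat3) (hG : G.PosDef) (p q : V3) :
    hrel G p q ^ 2 ≤ quadG G (p - q) ∧
    quadG G (p - q) ≤ p0 G p * p0 G q * hrel G p q ^ 2 := by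
  have hGsd := hG.posSemidef
  set A := quadG G p with hA
  set C := quadG G q with hC
  set B := p ⬝ᵥ G *ᵥ q with hB
  have hA0 : 0 ≤ A := by
    have h := hGsd.dotProduct_mulVec_nonneg p; rwa [star_trivial] at h
  have hC0 : 0 ≤ C := by
    have h := hGsd.dotProduct_mulVec_nonneg q; rwa [star_trivial] at h
  have hCS : B ^ 2 ≤ A * C := cauchy_schwarz G hGsd p q
  have hQ : quadG G (p - q) = A + C - 2 * B := quad_sub G hG.1 p q
  set a := p0 G p with ha
  set b := p0 G q with hb
  have ha2 : a ^ 2 = 1 + A := by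
    rw [ha, p0, sq_sqrt (by linarith)]
  have hb2 : b ^ 2 = 1 + C := by
    rw [hb, p0, sq_sqrt (by linarith)]
  have ha0 : 0 ≤ a := Real.sqrt_nonneg _
  have hb0 : 0 ≤ b := Real.sqrt_nonneg _
  set s := Real.sqrt (A * C) with hs
  have hs0 : 0 ≤ s := Real.sqrt_nonneg _
  have hs2 : s ^ 2 = A * C := sq_sqrt (mul_nonneg hA0 hC0)
  have hBs : B ≤ s := by nlinarith
  have h2s : 2 * s ≤ A + C := by nlinarith [sq_nonneg (A - C)]
  -- ab ≥ 1 + s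
  have hab1s : 1 + s ≤ a * b := by
    have h1 : (1 + s) ^ 2 ≤ (a * b) ^ 2 := by nlinarith
    nlinarith [mul_nonneg ha0 hb0]
  have habs : s ≤ a * b - 1 := by linarith
  -- the inside of hrel is nonneg
  have hE : -(a - b) ^ 2 + quadG G (p - q) = 2 * (a * b - 1 - B) := by
    rw [hQ]; linear_combination -ha2 - hb2
  have hE0 : 0 ≤ 2 * (a * b - 1 - B) := by linarith
  have hh2 : hrel G p q ^ 2 = 2 * (a * b - 1 - B) := by
    rw [hrel, ← ha, ← hb, hE, sq_sqrt hE0]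
  have key : (a * b - 1 - s) * (a * b - 1 + s) = (a - b) ^ 2 := by
    linear_combination b ^ 2 * ha2 + (1 + A) * hb2 - ha2 - hb2 - hs2
  have h1 : (a - b) ^ 2 ≤ (a * b - 1) * (2 * (a * b - 1 - B)) := by
    nlinarith [key, hCS, hs2, sq_nonneg (a * b - 1 - B)]
  constructor
  · rw [hh2, hQ]; nlinarith [sq_nonneg (a - b)]
  · rw [hh2, hQ]; linarith [h1, hE0]
end
end

section
/- Let G = (g^{ab}) be a symmetric positive definite real 3×3 matrix and K = (k^{ab}) a symmetric real 3×3 matrix. Suppose H ≥ γ for some γ > 0 and F ≤ η²/4 for some η ∈ [0,1). Then for every Z_η > 0 the function λ_η(p) = −((1−η)γ(p⁰−1) − k^{ab}p_a p_b / p⁰) Z_η satisfies λ_η(p) ≥ 0 for all p ∈ ℝ³. Moreover there is an absolute constant C such that for every orthonormal frame E for G and every a = 1,2,3, |∂λ_η/∂p_a| ≤ C (‖g⁻¹‖‖e⁻¹‖ + ‖k**‖‖e⁻¹‖ + ‖g⁻¹‖‖k**‖‖e⁻¹‖³) Z_η, where ‖k**‖ = max_{a,b}|k^{ab}|. -/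
open Matrix Real

noncomputable section

/-- The quadratic form `k^{ab} p_a p_b`. -/
def quadK (K : Mat3) (p : V3) : ℝ := p ⬝ᵥ K *ᵥ p

/-- The Hubble scalar `H = (1/3) g_{ab} k^{ab}` (indices lowered with `G⁻¹`). -/
def Hub (G K : Mat3) : ℝ := (1 / 3) * ∑ a, ∑ b, G⁻¹ a b * K a b

/-- The shear `σ^{ab} = k^{ab} − H g^{ab}`. -/
def shearUp (G K : Mat3) : Mat3 := K - Hub G K • G

/-- `σ_{ab} σ^{ab}` with `σ_{ab} = g_{ac} g_{bd} σ^{cd}`. -/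
def shearSq (G K : Mat3) : ℝ :=
  ∑ a, ∑ b, (G⁻¹ * shearUp G K * G⁻¹) a b * shearUp G K a b

/-- The Hubble-normalized shear variable `F = σ_{ab}σ^{ab}/(4H²)`. -/
def Fvar (G K : Mat3) : ℝ := shearSq G K / (4 * Hub G K ^ 2)

/-- `λ_η(p) = −((1−η)γ(p⁰−1) − k^{ab}p_a p_b/p⁰) Z_η`. -/
def lamEta (G K : Mat3) (γ η Zη : ℝ) (p : V3) : ℝ :=
  -((1 - η) * γ * (p0 G p - 1) - quadK K p / p0 G p) * Zη

/-- The maximum of the absolute values of the entries of a matrix. -/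
def entryNorm (M : Mat3) : ℝ := ⨆ i, ⨆ j, |M i j|

-- helpers
lemma quad_nonneg {G : Mat3} (hG : G.PosDef) (p : V3) : 0 ≤ quadG G p := by
  have := hG.posSemidef.re_dotProduct_nonneg p
  simpa [quadG] using this

lemma p0_pos {G : Mat3} (hG : G.PosDef) (p : V3) : 0 < p0 G p := by
  have := quad_nonneg hG p
  unfold p0; positivity

lemma p0_ge_one {G : Mat3} (hG : G.PosDef) (p : V3) : 1 ≤ p0 G p := by
  have := quad_nonneg hG p
  unfold p0
  calc (1:ℝ) = Real.sqrt 1 := by simp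
  _ ≤ Real.sqrt (1 + quadG G p) := Real.sqrt_le_sqrt (by linarith)

lemma p0_sq {G : Mat3} (hG : G.PosDef) (p : V3) : p0 G p ^ 2 = 1 + quadG G p := by
  have := quad_nonneg hG p
  unfold p0
  rw [Real.sq_sqrt (by linarith)]

lemma entry_le (M : Mat3) (i j : Fin 3) : |M i j| ≤ entryNorm M := by
  have h1 : |M i j| ≤ ⨆ j, |M i j| :=
    le_ciSup (f := fun j => |M i j|) (Set.Finite.bddAbove (Set.finite_range _)) j
  exact h1.trans (le_ciSup (f := fun i => ⨆ j, |M i j|) (Set.Finite.bddAbove (Set.finite_range _)) i)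

lemma entryNorm_nonneg (M : Mat3) : 0 ≤ entryNorm M :=
  (abs_nonneg _).trans (entry_le M 0 0)

lemma quad_expand (M : Mat3) (p v : V3) (t : ℝ) :
    quadK M (p + t • v)
      = quadK M p + (p ⬝ᵥ M *ᵥ v + v ⬝ᵥ M *ᵥ p) * t + quadK M v * t ^ 2 := by
  simp only [quadK, Matrix.mulVec_add, Matrix.mulVec_smul, dotProduct_add, add_dotProduct,
    dotProduct_smul, smul_dotProduct, smul_eq_mul]
  ring

lemma sum_entrywise (M N : Mat3) :
    ∑ a, ∑ b, M a b * N a b = Matrix.trace (M * Nᵀ) := by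
  simp [Matrix.trace, Matrix.mul_apply, Matrix.diag]

section Frame
variable {G K E : Mat3}

lemma frame_left (hE : E * G * Eᵀ = 1) : Eᵀ * E * G = 1 := by
  rw [Matrix.mul_assoc]
  exact mul_eq_one_comm.mp hE

lemma frame_inv (hE : E * G * Eᵀ = 1) : G⁻¹ = Eᵀ * E :=
  Matrix.inv_eq_right_inv (mul_eq_one_comm.mp (frame_left hE))

lemma frame_p (hE : E * G * Eᵀ = 1) (p : V3) : Eᵀ *ᵥ (E *ᵥ (G *ᵥ p)) = p := by
  rw [Matrix.mulVec_mulVec, Matrix.mulVec_mulVec, frame_left hE,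
    Matrix.one_mulVec]

lemma quadG_eq_qq (hE : E * G * Eᵀ = 1) (p : V3) :
    quadG G p = (E *ᵥ (G *ᵥ p)) ⬝ᵥ (E *ᵥ (G *ᵥ p)) := by
  set q := E *ᵥ (G *ᵥ p) with hq
  have hp : Eᵀ *ᵥ q = p := frame_p hE p
  calc quadG G p = p ⬝ᵥ (G *ᵥ p) := rfl
  _ = (Eᵀ *ᵥ q) ⬝ᵥ (G *ᵥ p) := by rw [hp]
  _ = q ⬝ᵥ (E *ᵥ (G *ᵥ p)) := by
      rw [Matrix.mulVec_transpose, ← Matrix.dotProduct_mulVec]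
  _ = q ⬝ᵥ q := by rw [← hq]

lemma abs_q_le (hG : G.PosDef) (hE : E * G * Eᵀ = 1) (p : V3) (i : Fin 3) :
    |(E *ᵥ (G *ᵥ p)) i| ≤ p0 G p := by
  set q := E *ᵥ (G *ᵥ p) with hq
  have h1 : q i * q i ≤ quadG G p := by
    rw [quadG_eq_qq hE p, ← hq]
    have : q ⬝ᵥ q = ∑ j, q j * q j := rfl
    rw [this]
    exact Finset.single_le_sum (f := fun j => q j * q j)
      (fun j _ => mul_self_nonneg _) (Finset.mem_univ i)
  have h2 : |q i| = Real.sqrt (q i * q i) := by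
    rw [Real.sqrt_mul_self_eq_abs]
  rw [h2]
  exact Real.sqrt_le_sqrt (by linarith)

lemma abs_p_le (hG : G.PosDef) (hE : E * G * Eᵀ = 1) (p : V3) (b : Fin 3) :
    |p b| ≤ 3 * entryNorm E * p0 G p := by
  set q := E *ᵥ (G *ᵥ p) with hq
  have hp : Eᵀ *ᵥ q = p := frame_p hE p
  have hb : p b = ∑ i, E i b * q i := by
    rw [← hp]; simp [Matrix.mulVec, dotProduct]
  rw [hb]
  calc |∑ i, E i b * q i| ≤ ∑ i, |E i b * q i| := Finset.abs_sum_le_sum_abs _ _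
  _ ≤ ∑ _i : Fin 3, entryNorm E * p0 G p := by
      refine Finset.sum_le_sum fun i _ => ?_
      rw [abs_mul]
      exact mul_le_mul (entry_le E i b) (abs_q_le hG hE p i) (abs_nonneg _) (entryNorm_nonneg E)
  _ = 3 * entryNorm E * p0 G p := by simp [Finset.sum_const]; ring

lemma gram_entry_le (a b : Fin 3) : |(Eᵀ * E) a b| ≤ 3 * entryNorm E ^ 2 := by
  rw [Matrix.mul_apply]
  calc |∑ i, Eᵀ a i * E i b| ≤ ∑ i, |Eᵀ a i * E i b| := Finset.abs_sum_le_sum_abs _ _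
  _ ≤ ∑ _i : Fin 3, entryNorm E * entryNorm E := by
      refine Finset.sum_le_sum fun i _ => ?_
      rw [abs_mul, Matrix.transpose_apply]
      exact mul_le_mul (entry_le E i a) (entry_le E i b) (abs_nonneg _) (entryNorm_nonneg E)
  _ = 3 * entryNorm E ^ 2 := by simp [Finset.sum_const]; ring

end Frame


section Frame
variable {G K E : Mat3}

lemma posdef_symm (hG : G.PosDef) : Gᵀ = G := by
  have h : Gᴴ = G := hG.isHermitian
  rwa [Matrix.conjTranspose_eq_transpose_of_trivial] at h

lemma shear_symm (hG : G.PosDef) (hK : K.IsSymm) : (shearUp G K)ᵀ = shearUp G K := by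
  unfold shearUp
  rw [Matrix.transpose_sub, Matrix.transpose_smul, posdef_symm hG, hK.eq]

lemma shearSq_eq (hG : G.PosDef) (hK : K.IsSymm) (hE : E * G * Eᵀ = 1) :
    shearSq G K = ∑ i, ∑ j, (E * shearUp G K * Eᵀ) i j ^ 2 := by
  set S := shearUp G K with hS
  have hSsym : Sᵀ = S := shear_symm hG hK
  have h1 : shearSq G K = Matrix.trace ((Eᵀ * (E * S * (Eᵀ * E) * S))) := by
    rw [shearSq, sum_entrywise, frame_inv hE, hSsym, ← hS]
    congr 1
    noncomm_ring
  have hT : (E * S * Eᵀ)ᵀ = E * S * Eᵀ := by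
    simp [Matrix.transpose_mul, Matrix.mul_assoc, hSsym]
  have h2 : ∑ i, ∑ j, (E * S * Eᵀ) i j ^ 2
      = Matrix.trace ((E * S * (Eᵀ * E) * S) * Eᵀ) := by
    have h3 : ∑ i, ∑ j, (E * S * Eᵀ) i j * (E * S * Eᵀ) i j
        = Matrix.trace ((E * S * Eᵀ) * (E * S * Eᵀ)ᵀ) := sum_entrywise _ _
    rw [hT] at h3
    simp only [sq]
    rw [h3]
    congr 1
    noncomm_ring
  rw [h1, h2, Matrix.trace_mul_comm]

lemma quad_frame (hE : E * G * Eᵀ = 1) (M : Mat3) (p : V3) :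
    p ⬝ᵥ M *ᵥ p = (E *ᵥ (G *ᵥ p)) ⬝ᵥ (E * M * Eᵀ) *ᵥ (E *ᵥ (G *ᵥ p)) := by
  have hp : Eᵀ *ᵥ (E *ᵥ (G *ᵥ p)) = p := frame_p hE p
  generalize hq : E *ᵥ (G *ᵥ p) = q at hp ⊢
  have h1 : (E * M * Eᵀ) *ᵥ q = E *ᵥ (M *ᵥ p) := by
    have h0 : E *ᵥ (M *ᵥ (Eᵀ *ᵥ q)) = (E * M * Eᵀ) *ᵥ q := by
      rw [Matrix.mulVec_mulVec, Matrix.mulVec_mulVec]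
    rw [← h0, hp]
  rw [h1]
  conv_rhs => rw [Matrix.dotProduct_mulVec, ← Matrix.mulVec_transpose]
  rw [hp]

end Frame

lemma exists_frame {G : Mat3} (hG : G.PosDef) : ∃ E : Mat3, E * G * Eᵀ = 1 := by
  have hGi : (G⁻¹).PosDef := hG.inv
  open scoped MatrixOrder in
  obtain ⟨S, hSsa, -, hS2⟩ := CFC.exists_sqrt_of_isSelfAdjoint_of_quasispectrumRestricts (a := G⁻¹)
    hGi.posSemidef.isHermitian (QuasispectrumRestricts.nnreal_of_nonneg hGi.posSemidef.nonneg)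
  have h2 : S * S = G⁻¹ := hS2
  have hsym : Sᵀ = S := by
    have h : star S = S := hSsa.star_eq
    rwa [Matrix.star_eq_conjTranspose, Matrix.conjTranspose_eq_transpose_of_trivial] at h
  have hdet : IsUnit G.det := isUnit_iff_ne_zero.mpr hG.det_pos.ne'
  have hG1 : G * (S * S) = 1 := by rw [h2]; exact Matrix.mul_nonsing_inv G hdet
  have h3 : S * S * G = 1 := mul_eq_one_comm.mp hG1
  rw [Matrix.mul_assoc] at h3
  have h4 : S * G * S = 1 := mul_eq_one_comm.mp h3
  exact ⟨S, by rw [hsym]; exact h4⟩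

private lemma key_scalar {γ η : ℝ} (hγ : 0 < γ) (hη0 : 0 ≤ η) (hη1 : η < 1)
    (QK A s x Hv : ℝ) (k1 : QK = Hv * A + x) (k2 : -(η * Hv * A) ≤ x) (k3 : γ ≤ Hv)
    (k4 : 0 ≤ A) (k5 : 1 ≤ s) (k6 : A = s ^ 2 - 1) :
    (1 - η) * γ * (s - 1) * s ≤ QK := by
  have hg0 : 0 ≤ (1 - η) * γ := mul_nonneg (by linarith) hγ.le
  have t1 : (s - 1) * s ≤ A := by nlinarith
  have t2 : (1 - η) * γ * ((s - 1) * s) ≤ (1 - η) * γ * A :=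
    mul_le_mul_of_nonneg_left t1 hg0
  have t3 : (1 - η) * γ * A ≤ (1 - η) * Hv * A :=
    mul_le_mul_of_nonneg_right
      (mul_le_mul_of_nonneg_left k3 (by linarith : (0:ℝ) ≤ 1 - η)) k4
  nlinarith [t2, t3]

private lemma lam_scalar {γ η Zη s QK : ℝ} (h : (1 - η) * γ * (s - 1) ≤ QK / s)
    (hZ : 0 ≤ Zη) : 0 ≤ -((1 - η) * γ * (s - 1) - QK / s) * Zη :=
  mul_nonneg (by linarith) hZ

set_option maxHeartbeats 1600000 in
lemma lam_nonneg {G K E : Mat3} (hG : G.PosDef) (hK : K.IsSymm) {γ η Zη : ℝ}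
    (hγ : 0 < γ) (hη0 : 0 ≤ η) (hη1 : η < 1) (hH : γ ≤ Hub G K)
    (hF : Fvar G K ≤ η ^ 2 / 4) (hZ : 0 < Zη) (hE : E * G * Eᵀ = 1) (p : V3) :
    0 ≤ lamEta G K γ η Zη p := by
  set H := Hub G K with hHdef
  set S := shearUp G K with hSdef
  set T := E * S * Eᵀ with hTdef
  set q := E *ᵥ (G *ᵥ p) with hqdef
  clear_value H S T q
  have hH0 : 0 < H := lt_of_lt_of_le hγ hH
  have hA : 0 ≤ quadG G p := quad_nonneg hG p
  have hs1 : 1 ≤ p0 G p := p0_ge_one hG p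
  have hs0 : 0 < p0 G p := p0_pos hG p
  have hsq : shearSq G K = ∑ i, ∑ j, T i j ^ 2 := by
    rw [hTdef, hSdef]; exact shearSq_eq hG hK hE
  have hshnn : 0 ≤ shearSq G K := by
    rw [hsq]; positivity
  have hFb : shearSq G K ≤ η ^ 2 * H ^ 2 := by
    have h4 : 0 < 4 * H ^ 2 := by positivity
    rw [Fvar, ← hHdef, div_le_div_iff₀ h4 (by norm_num : (0:ℝ) < 4)] at hF
    nlinarith [hF]
  have hqq : quadG G p = q ⬝ᵥ q := by rw [hqdef]; exact quadG_eq_qq hE p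
  have hqqnn : 0 ≤ q ⬝ᵥ q := by rw [← hqq]; exact hA
  have hsplit : quadK K p = H * quadG G p + p ⬝ᵥ S *ᵥ p := by
    rw [hSdef, shearUp, quadK, quadG, ← hHdef]
    simp only [Matrix.sub_mulVec, dotProduct_sub, Matrix.smul_mulVec,
      dotProduct_smul, smul_eq_mul]
    ring
  have hquadS : p ⬝ᵥ S *ᵥ p = q ⬝ᵥ T *ᵥ q := by
    rw [hTdef, hSdef, hqdef]; exact quad_frame hE (shearUp G K) p
  -- Cauchy-Schwarz
  have e1 : q ⬝ᵥ T *ᵥ q = ∑ x : Fin 3 × Fin 3, T x.1 x.2 * (q x.1 * q x.2) := by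
    rw [Fintype.sum_prod_type]
    simp only [dotProduct, Matrix.mulVec, Finset.mul_sum]
    exact Finset.sum_congr rfl fun i _ => Finset.sum_congr rfl fun j _ => by ring
  have e2 : ∑ x : Fin 3 × Fin 3, (q x.1 * q x.2) ^ 2 = (q ⬝ᵥ q) ^ 2 := by
    rw [Fintype.sum_prod_type, dotProduct, sq, Finset.sum_mul_sum]
    exact Finset.sum_congr rfl fun i _ => Finset.sum_congr rfl fun j _ => by ring
  have e3 : ∑ x : Fin 3 × Fin 3, T x.1 x.2 ^ 2 = shearSq G K := by
    rw [hsq, Fintype.sum_prod_type]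
  have CS : (q ⬝ᵥ T *ᵥ q) ^ 2 ≤ shearSq G K * (q ⬝ᵥ q) ^ 2 := by
    have h := Finset.sum_mul_sq_le_sq_mul_sq Finset.univ
      (fun x : Fin 3 × Fin 3 => T x.1 x.2) (fun x : Fin 3 × Fin 3 => q x.1 * q x.2)
    rw [← e1, ← e3, ← e2] at *
    simpa using h
  have habs : |q ⬝ᵥ T *ᵥ q| ≤ η * H * (q ⬝ᵥ q) := by
    have hx : (q ⬝ᵥ T *ᵥ q) ^ 2 ≤ (η * H * (q ⬝ᵥ q)) ^ 2 := by
      have h2 : shearSq G K * (q ⬝ᵥ q) ^ 2 ≤ η ^ 2 * H ^ 2 * (q ⬝ᵥ q) ^ 2 :=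
        mul_le_mul_of_nonneg_right hFb (sq_nonneg _)
      calc (q ⬝ᵥ T *ᵥ q) ^ 2 ≤ shearSq G K * (q ⬝ᵥ q) ^ 2 := CS
      _ ≤ η ^ 2 * H ^ 2 * (q ⬝ᵥ q) ^ 2 := h2
      _ = (η * H * (q ⬝ᵥ q)) ^ 2 := by ring
    calc |q ⬝ᵥ T *ᵥ q| = Real.sqrt ((q ⬝ᵥ T *ᵥ q) ^ 2) := (Real.sqrt_sq_eq_abs _).symm
    _ ≤ Real.sqrt ((η * H * (q ⬝ᵥ q)) ^ 2) := Real.sqrt_le_sqrt hx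
    _ = |η * H * (q ⬝ᵥ q)| := Real.sqrt_sq_eq_abs _
    _ = η * H * (q ⬝ᵥ q) := abs_of_nonneg (by positivity)
  have h1 : -(η * H * (q ⬝ᵥ q)) ≤ q ⬝ᵥ T *ᵥ q := neg_le_of_abs_le habs
  have hA' : q ⬝ᵥ q = p0 G p ^ 2 - 1 := by
    have := p0_sq hG p; rw [hqq] at this; linarith
  have hsplit' : quadK K p = H * (q ⬝ᵥ q) + q ⬝ᵥ T *ᵥ q := by
    rw [hsplit, hquadS, hqq]
  have hlow : (1 - η) * γ * (p0 G p - 1) * p0 G p ≤ quadK K p :=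
    key_scalar hγ hη0 hη1 (quadK K p) (q ⬝ᵥ q) (p0 G p) (q ⬝ᵥ T *ᵥ q) H
      hsplit' h1 hH hqqnn hs1 hA'
  have hdiv : (1 - η) * γ * (p0 G p - 1) ≤ quadK K p / p0 G p :=
    (le_div_iff₀ hs0).mpr hlow
  rw [lamEta]
  exact lam_scalar hdiv hZ.le

lemma hasDeriv_lam (A bG cG aK bK cK cγ Zη : ℝ) (hA : 0 ≤ A) :
    HasDerivAt (fun t : ℝ => -(cγ * (Real.sqrt (1 + (A + bG * t + cG * t ^ 2)) - 1)
        - (aK + bK * t + cK * t ^ 2) / Real.sqrt (1 + (A + bG * t + cG * t ^ 2))) * Zη)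
      (-((cγ * bG * Real.sqrt (1 + A) ^ 2 - 2 * bK * Real.sqrt (1 + A) ^ 2 + aK * bG)
          / (2 * Real.sqrt (1 + A) ^ 3)) * Zη) 0 := by
  have h1A : (0:ℝ) < 1 + A := by linarith
  have hs0 : 0 < Real.sqrt (1 + A) := Real.sqrt_pos.mpr h1A
  have hQ : HasDerivAt (fun t : ℝ => 1 + (A + bG * t + cG * t ^ 2)) bG 0 := by
    have h := ((((hasDerivAt_id (0:ℝ)).const_mul bG).const_add A).add
      ((hasDerivAt_pow 2 (0:ℝ)).const_mul cG)).const_add 1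
    simpa using h
  have hg0 : 1 + (A + bG * 0 + cG * 0 ^ 2) = 1 + A := by ring
  have hf : HasDerivAt Real.sqrt (1 / (2 * Real.sqrt (1 + A)))
      (1 + (A + bG * 0 + cG * 0 ^ 2)) := by
    rw [hg0]; exact Real.hasDerivAt_sqrt h1A.ne'
  have hSq : HasDerivAt (fun t : ℝ => Real.sqrt (1 + (A + bG * t + cG * t ^ 2)))
      (1 / (2 * Real.sqrt (1 + A)) * bG) 0 := by
    have h := hf.comp 0 hQ
    simpa [Function.comp_def] using h
  have hR : HasDerivAt (fun t : ℝ => aK + bK * t + cK * t ^ 2) bK 0 := by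
    have h := (((hasDerivAt_id (0:ℝ)).const_mul bK).const_add aK).add
      ((hasDerivAt_pow 2 (0:ℝ)).const_mul cK)
    simpa [Pi.add_def] using h
  have hne : Real.sqrt (1 + (A + bG * 0 + cG * 0 ^ 2)) ≠ 0 := by
    rw [hg0]; exact hs0.ne'
  have hDiv := hR.div hSq hne
  have hAll := (((hSq.sub_const 1).const_mul cγ).sub hDiv).neg.mul_const Zη
  convert hAll using 2
  rfl
  rfl
  rfl
  rw [hg0]
  norm_num
  generalize Real.sqrt (1 + A) = t at hs0 ⊢
  field_simp
  ring

lemma deriv_bound_scalar {γ η Zη s bG bK aK g k e : ℝ}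
    (hγ : 0 < γ) (hη0 : 0 ≤ η) (hη1 : η < 1) (hZ : 0 < Zη) (hs1 : 1 ≤ s)
    (hg : 0 ≤ g) (hk : 0 ≤ k) (he : 0 ≤ e)
    (hbG : |bG| ≤ 18 * g * e * s) (hbK : |bK| ≤ 18 * k * e * s)
    (haK : |aK| ≤ 81 * k * e ^ 2 * s ^ 2) (hγk : γ ≤ 9 * k * e ^ 2) :
    |(-(((1 - η) * γ * bG * s ^ 2 - 2 * bK * s ^ 2 + aK * bG) / (2 * s ^ 3)) * Zη)|
      ≤ 1000 * (g * e + k * e + g * k * e ^ 3) * Zη := by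
  have hs0 : (0:ℝ) < s := by linarith
  rw [abs_mul, abs_neg, abs_div, abs_of_pos hZ, abs_of_pos (by positivity : (0:ℝ) < 2 * s ^ 3)]
  apply mul_le_mul_of_nonneg_right _ hZ.le
  rw [div_le_iff₀ (by positivity : (0:ℝ) < 2 * s ^ 3)]
  have hge0 : 0 ≤ (1 - η) * γ := mul_nonneg (by linarith) hγ.le
  have hN : |(1 - η) * γ * bG * s ^ 2 - 2 * bK * s ^ 2 + aK * bG|
      ≤ (1 - η) * γ * |bG| * s ^ 2 + 2 * |bK| * s ^ 2 + |aK| * |bG| := by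
    calc |(1 - η) * γ * bG * s ^ 2 - 2 * bK * s ^ 2 + aK * bG|
        ≤ |(1 - η) * γ * bG * s ^ 2 - 2 * bK * s ^ 2| + |aK * bG| := abs_add_le _ _
    _ ≤ |(1 - η) * γ * bG * s ^ 2| + |2 * bK * s ^ 2| + |aK * bG| := by
        have := abs_sub ((1 - η) * γ * bG * s ^ 2) (2 * bK * s ^ 2)
        linarith
    _ ≤ (1 - η) * γ * |bG| * s ^ 2 + 2 * |bK| * s ^ 2 + |aK| * |bG| := by
        have e1 : |(1 - η) * γ * bG * s ^ 2| = (1 - η) * γ * |bG| * s ^ 2 := by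
          rw [abs_mul, abs_mul, abs_of_nonneg hge0, abs_of_nonneg (sq_nonneg s)]
        have e2 : |2 * bK * s ^ 2| = 2 * |bK| * s ^ 2 := by
          rw [abs_mul, abs_mul, abs_of_nonneg (sq_nonneg s), abs_two]
        have e3 : |aK * bG| = |aK| * |bG| := abs_mul _ _
        linarith
  have hc0 : (1 - η) * γ ≤ 9 * k * e ^ 2 := by nlinarith
  have c1 : (1 - η) * γ * |bG| * s ^ 2 ≤ (9 * k * e ^ 2) * (18 * g * e * s) * s ^ 2 := by
    have := mul_le_mul hc0 hbG (abs_nonneg _) (by positivity)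
    nlinarith [sq_nonneg s]
  have c2 : 2 * |bK| * s ^ 2 ≤ 2 * (18 * k * e * s) * s ^ 2 := by nlinarith [sq_nonneg s]
  have c3 : |aK| * |bG| ≤ (81 * k * e ^ 2 * s ^ 2) * (18 * g * e * s) :=
    mul_le_mul haK hbG (abs_nonneg _) (by positivity)
  have n1 : 0 ≤ g * e * s ^ 3 := by positivity
  have n2 : 0 ≤ k * e * s ^ 3 := by positivity
  have n3 : 0 ≤ g * k * e ^ 3 * s ^ 3 := by positivity
  nlinarith [hN, c1, c2, c3, n1, n2, n3]

lemma abs_sum3 {f : Fin 3 → ℝ} {c : ℝ} (h : ∀ i, |f i| ≤ c) : |∑ i, f i| ≤ 3 * c := by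
  calc |∑ i, f i| ≤ ∑ i, |f i| := Finset.abs_sum_le_sum_abs _ _
  _ ≤ ∑ _i : Fin 3, c := Finset.sum_le_sum fun i _ => h i
  _ = 3 * c := by simp [Finset.sum_const]

section DB
variable {G K E : Mat3}

lemma mulVec_bound (hG : G.PosDef) (hE : E * G * Eᵀ = 1) (M : Mat3) (p : V3) (b : Fin 3) :
    |(M *ᵥ p) b| ≤ 9 * entryNorm M * entryNorm E * p0 G p := by
  have h : ∀ c, |M b c * p c| ≤ entryNorm M * (3 * entryNorm E * p0 G p) := fun c => by
    rw [abs_mul]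
    exact mul_le_mul (entry_le M b c) (abs_p_le hG hE p c) (abs_nonneg _) (entryNorm_nonneg M)
  have := abs_sum3 h
  calc |(M *ᵥ p) b| = |∑ c, M b c * p c| := by simp [Matrix.mulVec, dotProduct]
  _ ≤ 3 * (entryNorm M * (3 * entryNorm E * p0 G p)) := abs_sum3 h
  _ = 9 * entryNorm M * entryNorm E * p0 G p := by ring

lemma dot_single_bound (hG : G.PosDef) (hE : E * G * Eᵀ = 1) (M : Mat3) (p : V3) (a : Fin 3) :
    |p ⬝ᵥ M *ᵥ (Pi.single a 1 : V3) + (Pi.single a 1 : V3) ⬝ᵥ M *ᵥ p|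
      ≤ 18 * entryNorm M * entryNorm E * p0 G p := by
  have h1 : (Pi.single a 1 : V3) ⬝ᵥ M *ᵥ p = (M *ᵥ p) a := by
    rw [single_dotProduct, one_mul]
  have h2 : |p ⬝ᵥ M *ᵥ (Pi.single a 1 : V3)| ≤ 9 * entryNorm M * entryNorm E * p0 G p := by
    have he : p ⬝ᵥ M *ᵥ (Pi.single a 1 : V3) = ∑ c, p c * M c a := by
      rw [Matrix.mulVec_single]
      simp [dotProduct]
    rw [he]
    have h : ∀ c, |p c * M c a| ≤ entryNorm M * (3 * entryNorm E * p0 G p) := fun c => by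
      rw [abs_mul, mul_comm (|p c|)]
      exact mul_le_mul (entry_le M c a) (abs_p_le hG hE p c) (abs_nonneg _) (entryNorm_nonneg M)
    calc |∑ c, p c * M c a| ≤ 3 * (entryNorm M * (3 * entryNorm E * p0 G p)) := abs_sum3 h
    _ = 9 * entryNorm M * entryNorm E * p0 G p := by ring
  calc |p ⬝ᵥ M *ᵥ (Pi.single a 1 : V3) + (Pi.single a 1 : V3) ⬝ᵥ M *ᵥ p|
      ≤ |p ⬝ᵥ M *ᵥ (Pi.single a 1 : V3)| + |(Pi.single a 1 : V3) ⬝ᵥ M *ᵥ p| := abs_add_le _ _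
  _ ≤ 9 * entryNorm M * entryNorm E * p0 G p + 9 * entryNorm M * entryNorm E * p0 G p := by
      rw [h1]
      exact add_le_add h2 (mulVec_bound hG hE M p a)
  _ = 18 * entryNorm M * entryNorm E * p0 G p := by ring

lemma quadK_bound (hG : G.PosDef) (hE : E * G * Eᵀ = 1) (M : Mat3) (p : V3) :
    |quadK M p| ≤ 81 * entryNorm M * entryNorm E ^ 2 * p0 G p ^ 2 := by
  have h : ∀ b, |p b * (M *ᵥ p) b|
      ≤ (3 * entryNorm E * p0 G p) * (9 * entryNorm M * entryNorm E * p0 G p) := fun b => by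
    rw [abs_mul]
    exact mul_le_mul (abs_p_le hG hE p b) (mulVec_bound hG hE M p b) (abs_nonneg _)
      (mul_nonneg (mul_nonneg (by norm_num) (entryNorm_nonneg E)) (p0_pos hG p).le)
  have e : quadK M p = ∑ b, p b * (M *ᵥ p) b := rfl
  rw [e]
  calc |∑ b, p b * (M *ᵥ p) b|
      ≤ 3 * ((3 * entryNorm E * p0 G p) * (9 * entryNorm M * entryNorm E * p0 G p)) := abs_sum3 h
  _ = 81 * entryNorm M * entryNorm E ^ 2 * p0 G p ^ 2 := by ring

lemma Hub_bound (hE : E * G * Eᵀ = 1) : Hub G K ≤ 9 * entryNorm K * entryNorm E ^ 2 := by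
  have hin : ∀ a, |∑ b, G⁻¹ a b * K a b| ≤ 3 * (3 * entryNorm E ^ 2 * entryNorm K) := fun a => by
    refine abs_sum3 fun b => ?_
    rw [abs_mul, frame_inv hE]
    exact mul_le_mul (gram_entry_le a b) (entry_le K a b) (abs_nonneg _) (by positivity)
  have hout : |∑ a, ∑ b, G⁻¹ a b * K a b| ≤ 3 * (3 * (3 * entryNorm E ^ 2 * entryNorm K)) :=
    abs_sum3 hin
  have : Hub G K ≤ |Hub G K| := le_abs_self _
  rw [Hub] at this ⊢
  calc (1/3 : ℝ) * ∑ a, ∑ b, G⁻¹ a b * K a b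
      ≤ (1/3 : ℝ) * |∑ a, ∑ b, G⁻¹ a b * K a b| := by
        have := le_abs_self (∑ a, ∑ b, G⁻¹ a b * K a b)
        linarith
  _ ≤ (1/3 : ℝ) * (3 * (3 * (3 * entryNorm E ^ 2 * entryNorm K))) := by linarith [hout]
  _ = 9 * entryNorm K * entryNorm E ^ 2 := by ring

lemma deriv_part (hG : G.PosDef) (hK : K.IsSymm) {γ η Zη : ℝ}
    (hγ : 0 < γ) (hη0 : 0 ≤ η) (hη1 : η < 1) (hH : γ ≤ Hub G K) (hZ : 0 < Zη)
    (hE : E * G * Eᵀ = 1) (p : V3) (a : Fin 3) :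
    DifferentiableAt ℝ (fun t : ℝ => lamEta G K γ η Zη (p + t • (Pi.single a 1 : V3))) 0 ∧
    |deriv (fun t : ℝ => lamEta G K γ η Zη (p + t • (Pi.single a 1 : V3))) 0|
      ≤ 1000 * (entryNorm G * entryNorm E + entryNorm K * entryNorm E
          + entryNorm G * entryNorm K * entryNorm E ^ 3) * Zη := by
  set v : V3 := Pi.single a 1 with hv
  have hA : (0:ℝ) ≤ quadK G p := quad_nonneg hG p
  have hfun : (fun t : ℝ => lamEta G K γ η Zη (p + t • v)) =
      (fun t : ℝ => -((1 - η) * γ *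
          (Real.sqrt (1 + (quadK G p + (p ⬝ᵥ G *ᵥ v + v ⬝ᵥ G *ᵥ p) * t + quadK G v * t ^ 2)) - 1)
        - (quadK K p + (p ⬝ᵥ K *ᵥ v + v ⬝ᵥ K *ᵥ p) * t + quadK K v * t ^ 2)
          / Real.sqrt (1 + (quadK G p + (p ⬝ᵥ G *ᵥ v + v ⬝ᵥ G *ᵥ p) * t + quadK G v * t ^ 2)))
          * Zη) := by
    funext t
    rw [lamEta, p0, show quadG G (p + t • v) = quadK G (p + t • v) from rfl,
      quad_expand G p v t, quad_expand K p v t]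
  have hder := hasDeriv_lam (quadK G p) (p ⬝ᵥ G *ᵥ v + v ⬝ᵥ G *ᵥ p) (quadK G v)
    (quadK K p) (p ⬝ᵥ K *ᵥ v + v ⬝ᵥ K *ᵥ p) (quadK K v) ((1 - η) * γ) Zη hA
  rw [hfun]
  refine ⟨hder.differentiableAt, ?_⟩
  rw [hder.deriv]
  exact deriv_bound_scalar hγ hη0 hη1 hZ (p0_ge_one hG p) (entryNorm_nonneg G)
    (entryNorm_nonneg K) (entryNorm_nonneg E)
    (dot_single_bound hG hE G p a) (dot_single_bound hG hE K p a)
    (quadK_bound hG hE K p) (le_trans hH (Hub_bound hE))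
end DB

/-- if `H ≥ γ > 0` and `F ≤ η²/4` with `η ∈ [0,1)`, then `λ_η ≥ 0`, and there
is an absolute constant `C` such that for every orthonormal frame `E` for `G`, all `p` and
every direction `a`, `|∂λ_η/∂p_a| ≤ C(‖g⁻¹‖‖e⁻¹‖ + ‖k**‖‖e⁻¹‖ + ‖g⁻¹‖‖k**‖‖e⁻¹‖³) Z_η`. -/
theorem stmt5 :
    ∃ C > (0 : ℝ), ∀ (G K : Mat3), G.PosDef → K.IsSymm →
      ∀ γ η : ℝ, 0 < γ → 0 ≤ η → η < 1 → γ ≤ Hub G K → Fvar G K ≤ η ^ 2 / 4 →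
      ∀ Zη : ℝ, 0 < Zη →
        (∀ p : V3, 0 ≤ lamEta G K γ η Zη p) ∧
        ∀ E : Mat3, E * G * Eᵀ = 1 → ∀ p : V3, ∀ a : Fin 3,
          DifferentiableAt ℝ (fun t : ℝ => lamEta G K γ η Zη (p + t • (Pi.single a 1 : V3))) 0 ∧
          |deriv (fun t : ℝ => lamEta G K γ η Zη (p + t • (Pi.single a 1 : V3))) 0|
            ≤ C * (entryNorm G * entryNorm E + entryNorm K * entryNorm E
                + entryNorm G * entryNorm K * entryNorm E ^ 3) * Zη := by
  refine ⟨1000, by norm_num, ?_⟩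
  intro G K hG hK γ η hγ hη0 hη1 hH hF Zη hZ
  obtain ⟨E₀, hE₀⟩ := exists_frame hG
  refine ⟨fun p => lam_nonneg hG hK hγ hη0 hη1 hH hF hZ hE₀ p, ?_⟩
  intro E hE p a
  exact deriv_part hG hK hγ hη0 hη1 hH hZ hE p a
end
end
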